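/- (Equality of the two forms of the Replica Symmetric trial function.) Let β > 0, let J be a real random variable with symmetric distribution and E|J| < ∞, and let W, W' be i.i.d. random variables with values in [−1,1], with the pair (W,W') independent of J. Define J̃ := (1/β)·artanh(tanh(βJ)·W) and Ĵ := (1/β)·artanh(tanh(βJ)·W·W'), and set q̃_{2n} := E[W^{2n}]. Then E[log cosh(βJ)] − 2·E[log cosh(βJ̃)] + E[log cosh(βĴ)] = ∑_{n=1}^∞ (1/(2n))·E[tanh^{2n}(βJ)]·(1 − q̃_{2n})², with all expectations and the series finite. -/

import Mathlib

open MeasureTheory ProbabilityTheory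

/-- The inverse hyperbolic tangent on `(−1,1)`: `artanh x = (1/2)·log((1+x)/(1−x))`. -/
noncomputable def artanh (x : ℝ) : ℝ := Real.log ((1 + x) / (1 - x)) / 2

/-- log cosh x in terms of tanh. -/
lemma logcosh_eq_tanh (x : ℝ) :
    Real.log (Real.cosh x) = -Real.log (1 - Real.tanh x ^ 2) / 2 := by
  have hc := Real.cosh_pos x
  have h1 : 1 - Real.tanh x ^ 2 = (Real.cosh x ^ 2)⁻¹ := by
    rw [Real.tanh_eq_sinh_div_cosh, div_pow]
    have := Real.cosh_sq_sub_sinh_sq x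
    field_simp
    exact this
  rw [h1, Real.log_inv, Real.log_pow]
  push_cast; ring

lemma abs_tanh_lt_one (x : ℝ) : |Real.tanh x| < 1 := by
  have hc := Real.cosh_pos x
  have h2 : Real.tanh x ^ 2 < 1 := by
    have h1 : 1 - Real.tanh x ^ 2 = (Real.cosh x ^ 2)⁻¹ := by
      rw [Real.tanh_eq_sinh_div_cosh, div_pow]
      have := Real.cosh_sq_sub_sinh_sq x
      field_simp
      exact this
    nlinarith [inv_pos.mpr (pow_pos hc 2)]
  nlinarith [abs_nonneg (Real.tanh x), sq_abs (Real.tanh x)]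

/-- log cosh (artanh x) = -(1/2) log (1 - x²) for |x| < 1. -/
lemma logcosh_artanh {x : ℝ} (hx : |x| < 1) :
    Real.log (Real.cosh (artanh x)) = -Real.log (1 - x ^ 2) / 2 := by
  obtain ⟨hx1, hx2⟩ := abs_lt.mp hx
  have h1 : (0:ℝ) < 1 - x := by linarith
  have h2 : (0:ℝ) < 1 + x := by linarith
  have ha : (0:ℝ) < (1 + x) / (1 - x) := div_pos h2 h1
  set E := Real.exp (artanh x) with hE
  have hEpos : 0 < E := Real.exp_pos _
  have hE2 : E ^ 2 = (1 + x) / (1 - x) := by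
    rw [hE, ← Real.exp_nat_mul]
    have : (2:ℝ) * artanh x = Real.log ((1 + x) / (1 - x)) := by
      rw [artanh]; ring
    push_cast at this ⊢
    rw [this, Real.exp_log ha]
  have hcosh : Real.cosh (artanh x) = (E + E⁻¹) / 2 := by
    rw [Real.cosh_eq, Real.exp_neg, hE]
  have hsq : Real.cosh (artanh x) ^ 2 = (1 - x ^ 2)⁻¹ := by
    rw [hcosh]
    have hx2pos : (0:ℝ) < 1 - x ^ 2 := by nlinarith
    have hexp : ((E + E⁻¹) / 2) ^ 2 = (E ^ 2 + 2 + (E ^ 2)⁻¹) / 4 := by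
      field_simp; ring
    rw [hexp, hE2]
    rw [show (1:ℝ) - x ^ 2 = (1 - x) * (1 + x) by ring]
    field_simp
    ring
  have := Real.log_pow (Real.cosh (artanh x)) 2
  rw [hsq, Real.log_inv] at this
  push_cast at this
  linarith

lemma key_expand {Ω : Type} [MeasureSpace Ω] [IsProbabilityMeasure (ℙ : Measure Ω)]
    (t s : Ω → ℝ) (htm : Measurable t) (hsm : Measurable s)
    (ht : ∀ ω, |t ω| < 1) (hs : ∀ ω, |s ω| ≤ 1)
    (hint : Integrable (fun ω => -Real.log (1 - t ω ^ 2) / 2) ℙ) :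
    Integrable (fun ω => -Real.log (1 - (t ω * s ω) ^ 2) / 2) ℙ ∧
    HasSum (fun n : ℕ => (∫ ω, (t ω * s ω) ^ (2 * (n + 1)) ∂ℙ) / (2 * (n + 1)))
      (∫ ω, -Real.log (1 - (t ω * s ω) ^ 2) / 2 ∂ℙ) := by
  set g : Ω → ℝ := fun ω => -Real.log (1 - (t ω * s ω) ^ 2) / 2 with hg
  set F : ℕ → Ω → ℝ := fun n ω => (t ω * s ω) ^ (2 * (n + 1)) / (2 * (n + 1)) with hF
  -- basic bounds
  have habs : ∀ ω, |t ω * s ω| < 1 := by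
    intro ω
    rw [abs_mul]
    calc |t ω| * |s ω| ≤ |t ω| * 1 := by
          exact mul_le_mul_of_nonneg_left (hs ω) (abs_nonneg _)
      _ < 1 := by simpa using ht ω
  have hsqlt : ∀ ω, (t ω * s ω) ^ 2 < 1 := by
    intro ω
    nlinarith [habs ω, abs_nonneg (t ω * s ω), sq_abs (t ω * s ω)]
  have hsqnn : ∀ ω, 0 ≤ (t ω * s ω) ^ 2 := fun ω => sq_nonneg _
  -- pointwise HasSum
  have hptsum : ∀ ω, HasSum (fun n : ℕ => F n ω) (g ω) := by
    intro ω
    have habs2 : |(t ω * s ω) ^ 2| < 1 := by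
      rw [abs_of_nonneg (hsqnn ω)]; exact hsqlt ω
    have h1 := (Real.hasSum_pow_div_log_of_abs_lt_one habs2).div_const 2
    have heq : (fun n : ℕ => ((t ω * s ω) ^ 2) ^ (n + 1) / (n + 1) / 2)
        = fun n : ℕ => F n ω := by
      funext n
      rw [hF]
      dsimp only
      rw [div_div, ← pow_mul]
      congr 1
      push_cast; ring
    rw [heq] at h1
    exact h1
  -- g is nonneg and dominated by the integrable bound
  have hgnn : ∀ ω, 0 ≤ g ω := by
    intro ω
    have : Real.log (1 - (t ω * s ω) ^ 2) ≤ 0 :=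
      Real.log_nonpos (by linarith [hsqlt ω]) (by linarith [hsqnn ω])
    simp only [hg]
    linarith
  have hgle : ∀ ω, g ω ≤ -Real.log (1 - t ω ^ 2) / 2 := by
    intro ω
    have hs2 : s ω ^ 2 ≤ 1 := by
      nlinarith [hs ω, sq_abs (s ω), abs_nonneg (s ω)]
    have h1 : (t ω * s ω) ^ 2 ≤ t ω ^ 2 := by
      rw [mul_pow]
      nlinarith [sq_nonneg (t ω)]
    have h2 : (0:ℝ) < 1 - t ω ^ 2 := by
      nlinarith [ht ω, abs_nonneg (t ω), sq_abs (t ω)]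
    have h3 := Real.log_le_log h2 (by linarith : 1 - t ω ^ 2 ≤ 1 - (t ω * s ω) ^ 2)
    simp only [hg]
    linarith
  have hgmeas : Measurable g := by
    apply Measurable.div _ measurable_const
    apply Measurable.neg
    exact Real.measurable_log.comp ((measurable_const.sub ((htm.mul hsm).pow measurable_const)))
  have hgint : Integrable g ℙ := by
    refine hint.mono' hgmeas.aestronglyMeasurable ?_
    filter_upwards with ω
    rw [Real.norm_eq_abs, abs_of_nonneg (hgnn ω)]
    exact hgle ω
  refine ⟨hgint, ?_⟩
  -- each F n is integrable
  have hFnn : ∀ n ω, 0 ≤ F n ω := by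
    intro n ω
    apply div_nonneg _ (by positivity)
    rw [show 2 * (n + 1) = (n + 1) * 2 by ring, pow_mul]
    positivity
  have hFmeas : ∀ n, Measurable (F n) := fun n =>
    ((htm.mul hsm).pow measurable_const).div measurable_const
  have hFint : ∀ n, Integrable (F n) ℙ := by
    intro n
    refine (integrable_const (1 : ℝ)).mono' (hFmeas n).aestronglyMeasurable ?_
    filter_upwards with ω
    rw [Real.norm_eq_abs, abs_of_nonneg (hFnn n ω)]
    have h1 : (t ω * s ω) ^ (2 * (n + 1)) ≤ 1 := by
      calc (t ω * s ω) ^ (2 * (n + 1)) ≤ |(t ω * s ω) ^ (2 * (n + 1))| := le_abs_self _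
        _ = |t ω * s ω| ^ (2 * (n + 1)) := abs_pow _ _
        _ ≤ 1 := pow_le_one₀ (abs_nonneg _) (habs ω).le
    have hd : (1:ℝ) ≤ 2 * ((n:ℝ) + 1) := by
      have : (0:ℝ) ≤ (n:ℝ) := Nat.cast_nonneg n
      linarith
    rw [hF]
    dsimp only
    rw [div_le_one (by positivity)]
    linarith
  -- summability of the integrals
  have hsum_int : Summable (fun n => ∫ ω, F n ω ∂ℙ) := by
    apply summable_of_sum_range_le (c := ∫ ω, -Real.log (1 - t ω ^ 2) / 2 ∂ℙ)
      (fun n => integral_nonneg (hFnn n))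
    intro N
    rw [← integral_finset_sum _ (fun i _ => hFint i)]
    apply integral_mono (integrable_finset_sum _ fun i _ => hFint i) hint
    intro ω
    calc ∑ i ∈ Finset.range N, F i ω
        ≤ g ω := sum_le_hasSum _ (fun i _ => hFnn i ω) (hptsum ω)
      _ ≤ -Real.log (1 - t ω ^ 2) / 2 := hgle ω
  have hnorm : Summable (fun n => ∫ ω, ‖F n ω‖ ∂ℙ) := by
    refine hsum_int.congr fun n => ?_
    apply integral_congr_ae
    filter_upwards with ω
    rw [Real.norm_eq_abs, abs_of_nonneg (hFnn n ω)]
  have hhs := hasSum_integral_of_summable_integral_norm hFint hnorm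
  have htsum_eq : (∫ ω, (∑' n, F n ω) ∂ℙ) = ∫ ω, g ω ∂ℙ :=
    integral_congr_ae (Filter.Eventually.of_forall fun ω => (hptsum ω).tsum_eq)
  rw [htsum_eq] at hhs
  have hfe : (fun n => ∫ ω, F n ω ∂ℙ)
      = fun n : ℕ => (∫ ω, (t ω * s ω) ^ (2 * (n + 1)) ∂ℙ) / (2 * (n + 1)) :=
    funext fun n => integral_div _ _
  rw [hfe] at hhs
  exact hhs

lemma logcosh_le_abs (x : ℝ) : Real.log (Real.cosh x) ≤ |x| := by
  rw [Real.log_le_iff_le_exp (Real.cosh_pos x), Real.cosh_eq]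
  have h1 : Real.exp x ≤ Real.exp |x| := Real.exp_le_exp.mpr (le_abs_self x)
  have h2 : Real.exp (-x) ≤ Real.exp |x| := Real.exp_le_exp.mpr (neg_le_abs x)
  linarith

/-- Equality of the two forms of the Replica Symmetric trial function:
with `J` symmetric integrable, `W, W'` i.i.d. with values in `[−1,1]`, `(W,W')`
independent of `J`, `J̃ := (1/β)·artanh(tanh(βJ)·W)`,
`Ĵ := (1/β)·artanh(tanh(βJ)·W·W')` and `q̃_{2n} := E[W^{2n}]`, one has
`E[log cosh(βJ)] − 2·E[log cosh(βJ̃)] + E[log cosh(βĴ)]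
  = ∑_{n≥1} (1/(2n))·E[tanh^{2n}(βJ)]·(1 − q̃_{2n})²`,
with all expectations and the series finite. -/
theorem rs_trial_function_eq (β : ℝ) (hβ : 0 < β)
    (Ω : Type) [MeasureSpace Ω] [IsProbabilityMeasure (ℙ : Measure Ω)]
    (J W W' : Ω → ℝ) (hJmeas : Measurable J) (hWmeas : Measurable W)
    (hW'meas : Measurable W')
    (hJsymm : Measure.map J ℙ = Measure.map (fun ω => -J ω) ℙ)
    (hJint : Integrable J ℙ)
    (hW : ∀ ω, W ω ∈ Set.Icc (-1 : ℝ) 1) (hW' : ∀ ω, W' ω ∈ Set.Icc (-1 : ℝ) 1)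
    (hWid : IdentDistrib W W' ℙ ℙ) (hWindep : IndepFun W W' ℙ)
    (hindep : IndepFun (fun ω => (W ω, W' ω)) J ℙ) :
    Integrable (fun ω => Real.log (Real.cosh (β * J ω))) ℙ ∧
    Integrable (fun ω =>
      Real.log (Real.cosh (β * ((1 / β) * artanh (Real.tanh (β * J ω) * W ω))))) ℙ ∧
    Integrable (fun ω =>
      Real.log (Real.cosh (β * ((1 / β) * artanh (Real.tanh (β * J ω) * W ω * W' ω))))) ℙ ∧
    Summable (fun n : ℕ => (1 / (2 * (n + 1) : ℝ)) *
      (∫ ω, Real.tanh (β * J ω) ^ (2 * (n + 1)) ∂ℙ) *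
      (1 - ∫ ω, (W ω) ^ (2 * (n + 1)) ∂ℙ) ^ 2) ∧
    (∫ ω, Real.log (Real.cosh (β * J ω)) ∂ℙ)
        - 2 * ∫ ω, Real.log (Real.cosh (β * ((1 / β) * artanh (Real.tanh (β * J ω) * W ω)))) ∂ℙ
        + ∫ ω, Real.log (Real.cosh (β * ((1 / β) * artanh (Real.tanh (β * J ω) * W ω * W' ω)))) ∂ℙ
      = ∑' n : ℕ, (1 / (2 * (n + 1) : ℝ)) *
          (∫ ω, Real.tanh (β * J ω) ^ (2 * (n + 1)) ∂ℙ) *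
          (1 - ∫ ω, (W ω) ^ (2 * (n + 1)) ∂ℙ) ^ 2 := by
  have hβ0 : β ≠ 0 := ne_of_gt hβ
  set t : Ω → ℝ := fun ω => Real.tanh (β * J ω) with htdef
  have htanh_cont : Continuous Real.tanh := by
    have h : Real.tanh = fun x => Real.sinh x / Real.cosh x :=
      funext fun y => Real.tanh_eq_sinh_div_cosh y
    rw [h]
    exact Real.continuous_sinh.div Real.continuous_cosh fun x => (Real.cosh_pos x).ne'
  have htm : Measurable t :=
    htanh_cont.measurable.comp (measurable_const.mul hJmeas)
  have ht : ∀ ω, |t ω| < 1 := fun ω => abs_tanh_lt_one _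
  have hWabs : ∀ ω, |W ω| ≤ 1 := fun ω => abs_le.mpr ⟨(hW ω).1, (hW ω).2⟩
  have hW'abs : ∀ ω, |W' ω| ≤ 1 := fun ω => abs_le.mpr ⟨(hW' ω).1, (hW' ω).2⟩
  -- the dominating function is integrable
  have hdom_eq : (fun ω => -Real.log (1 - t ω ^ 2) / 2)
      = fun ω => Real.log (Real.cosh (β * J ω)) :=
    funext fun ω => (logcosh_eq_tanh (β * J ω)).symm
  have hint : Integrable (fun ω => -Real.log (1 - t ω ^ 2) / 2) ℙ := by
    rw [hdom_eq]
    have hmeas : Measurable fun ω => Real.log (Real.cosh (β * J ω)) :=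
      Real.measurable_log.comp
        (Real.continuous_cosh.measurable.comp (measurable_const.mul hJmeas))
    refine ((hJint.abs.const_mul β).mono' hmeas.aestronglyMeasurable ?_)
    filter_upwards with ω
    rw [Real.norm_eq_abs,
      abs_of_nonneg (Real.log_nonneg (Real.one_le_cosh _))]
    calc Real.log (Real.cosh (β * J ω)) ≤ |β * J ω| := logcosh_le_abs _
      _ = β * |J ω| := by rw [abs_mul, abs_of_pos hβ]
  -- three applications of key_expand
  obtain ⟨hI1, hS1⟩ := key_expand t (fun _ => (1:ℝ)) htm measurable_const ht
    (fun ω => by norm_num) hint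
  obtain ⟨hI2, hS2⟩ := key_expand t W htm hWmeas ht hWabs hint
  have hWW'abs : ∀ ω, |W ω * W' ω| ≤ 1 := by
    intro ω
    rw [abs_mul]
    exact mul_le_one₀ (hWabs ω) (abs_nonneg _) (hW'abs ω)
  obtain ⟨hI3, hS3⟩ := key_expand t (fun ω => W ω * W' ω) htm (hWmeas.mul hW'meas) ht
    hWW'abs hint
  -- identify the three integrands
  have e1 : (fun ω => Real.log (Real.cosh (β * J ω)))
      = fun ω => -Real.log (1 - (t ω * 1) ^ 2) / 2 := by
    funext ω; rw [mul_one]; exact logcosh_eq_tanh _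
  have hβy : ∀ y : ℝ, β * (1 / β * y) = y := fun y => by field_simp
  have e2 : (fun ω => Real.log (Real.cosh (β * (1 / β * artanh (Real.tanh (β * J ω) * W ω)))))
      = fun ω => -Real.log (1 - (t ω * W ω) ^ 2) / 2 := by
    funext ω
    rw [hβy]
    refine logcosh_artanh ?_
    rw [abs_mul]
    calc |t ω| * |W ω| ≤ |t ω| * 1 := mul_le_mul_of_nonneg_left (hWabs ω) (abs_nonneg _)
      _ < 1 := by simpa using ht ω
  have e3 : (fun ω =>
        Real.log (Real.cosh (β * (1 / β * artanh (Real.tanh (β * J ω) * W ω * W' ω)))))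
      = fun ω => -Real.log (1 - (t ω * (W ω * W' ω)) ^ 2) / 2 := by
    funext ω
    rw [hβy, ← mul_assoc]
    refine logcosh_artanh ?_
    rw [abs_mul, abs_mul]
    calc |t ω| * |W ω| * |W' ω| = |t ω| * (|W ω| * |W' ω|) := by ring
      _ ≤ |t ω| * 1 := mul_le_mul_of_nonneg_left
          (mul_le_one₀ (hWabs ω) (abs_nonneg _) (hW'abs ω)) (abs_nonneg _)
      _ < 1 := by simpa using ht ω
  -- independence factorizations
  have htpow : ∀ k : ℕ, AEStronglyMeasurable (fun ω => t ω ^ k) ℙ := fun k =>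
    (htm.pow_const k).aestronglyMeasurable
  have hψ : ∀ k : ℕ, Measurable fun x : ℝ => Real.tanh (β * x) ^ k := fun k =>
    (htanh_cont.measurable.comp (measurable_const.mul measurable_id)).pow_const k
  have hfac2 : ∀ n : ℕ, (∫ ω, (t ω * W ω) ^ (2 * (n + 1)) ∂ℙ)
      = (∫ ω, W ω ^ (2 * (n + 1)) ∂ℙ) * ∫ ω, t ω ^ (2 * (n + 1)) ∂ℙ := by
    intro n
    have hI : IndepFun (fun ω => W ω ^ (2 * (n + 1))) (fun ω => t ω ^ (2 * (n + 1))) ℙ :=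
      hindep.comp (measurable_fst.pow_const _) (hψ _)
    have h := hI.integral_fun_mul_eq_mul_integral ((hWmeas.pow_const _).aestronglyMeasurable) (htpow _)
    rw [← h]
    apply integral_congr_ae
    filter_upwards with ω
    rw [mul_pow]
    ring
  have hQ' : ∀ n : ℕ, (∫ ω, W' ω ^ (2 * (n + 1)) ∂ℙ) = ∫ ω, W ω ^ (2 * (n + 1)) ∂ℙ :=
    fun n => (hWid.symm.comp (measurable_id.pow_const _)).integral_eq
  have hfac3 : ∀ n : ℕ, (∫ ω, (t ω * (W ω * W' ω)) ^ (2 * (n + 1)) ∂ℙ)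
      = ((∫ ω, W ω ^ (2 * (n + 1)) ∂ℙ) ^ 2) * ∫ ω, t ω ^ (2 * (n + 1)) ∂ℙ := by
    intro n
    have hI : IndepFun (fun ω => (W ω * W' ω) ^ (2 * (n + 1)))
        (fun ω => t ω ^ (2 * (n + 1))) ℙ :=
      hindep.comp ((measurable_fst.mul measurable_snd).pow_const _) (hψ _)
    have h1 := hI.integral_fun_mul_eq_mul_integral
      (((hWmeas.mul hW'meas).pow_const _).aestronglyMeasurable) (htpow _)
    have hI2 : IndepFun (fun ω => W ω ^ (2 * (n + 1))) (fun ω => W' ω ^ (2 * (n + 1))) ℙ :=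
      hWindep.comp (measurable_id.pow_const _) (measurable_id.pow_const _)
    have h2 := hI2.integral_fun_mul_eq_mul_integral ((hWmeas.pow_const _).aestronglyMeasurable)
      ((hW'meas.pow_const _).aestronglyMeasurable)
    calc ∫ ω, (t ω * (W ω * W' ω)) ^ (2 * (n + 1)) ∂ℙ
        = ∫ ω, (W ω * W' ω) ^ (2 * (n + 1)) * t ω ^ (2 * (n + 1)) ∂ℙ := by
          apply integral_congr_ae
          filter_upwards with ω
          rw [mul_pow]
          ring
      _ = (∫ ω, (W ω * W' ω) ^ (2 * (n + 1)) ∂ℙ) * ∫ ω, t ω ^ (2 * (n + 1)) ∂ℙ := h1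
      _ = ((∫ ω, W ω ^ (2 * (n + 1)) ∂ℙ) ^ 2) * ∫ ω, t ω ^ (2 * (n + 1)) ∂ℙ := by
          congr 1
          calc ∫ ω, (W ω * W' ω) ^ (2 * (n + 1)) ∂ℙ
              = ∫ ω, W ω ^ (2 * (n + 1)) * W' ω ^ (2 * (n + 1)) ∂ℙ := by
                apply integral_congr_ae
                filter_upwards with ω
                rw [mul_pow]
            _ = (∫ ω, W ω ^ (2 * (n + 1)) ∂ℙ) * ∫ ω, W' ω ^ (2 * (n + 1)) ∂ℙ := h2
            _ = (∫ ω, W ω ^ (2 * (n + 1)) ∂ℙ) ^ 2 := by rw [hQ' n]; ring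
  -- rewrite the three HasSums
  have hg1 : (fun n : ℕ => (∫ ω, (t ω * 1) ^ (2 * (n + 1)) ∂ℙ) / (2 * (n + 1)))
      = fun n : ℕ => (∫ ω, t ω ^ (2 * (n + 1)) ∂ℙ) / (2 * (n + 1)) := by
    funext n; simp only [mul_one]
  rw [hg1] at hS1
  have hg2 : (fun n : ℕ => (∫ ω, (t ω * W ω) ^ (2 * (n + 1)) ∂ℙ) / (2 * (n + 1)))
      = fun n : ℕ => (∫ ω, W ω ^ (2 * (n + 1)) ∂ℙ) *
          ((∫ ω, t ω ^ (2 * (n + 1)) ∂ℙ) / (2 * (n + 1))) := by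
    funext n; rw [hfac2 n]; ring
  rw [hg2] at hS2
  have hg3 : (fun n : ℕ => (∫ ω, (t ω * (W ω * W' ω)) ^ (2 * (n + 1)) ∂ℙ) / (2 * (n + 1)))
      = fun n : ℕ => ((∫ ω, W ω ^ (2 * (n + 1)) ∂ℙ) ^ 2) *
          ((∫ ω, t ω ^ (2 * (n + 1)) ∂ℙ) / (2 * (n + 1))) := by
    funext n; rw [hfac3 n]; ring
  rw [hg3] at hS3
  have H := (hS1.sub (hS2.mul_left 2)).add hS3
  have hfn : (fun n : ℕ => ((∫ ω, t ω ^ (2 * (n + 1)) ∂ℙ) / (2 * (n + 1)) -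
        2 * ((∫ ω, W ω ^ (2 * (n + 1)) ∂ℙ) *
          ((∫ ω, t ω ^ (2 * (n + 1)) ∂ℙ) / (2 * (n + 1))))) +
        ((∫ ω, W ω ^ (2 * (n + 1)) ∂ℙ) ^ 2) *
          ((∫ ω, t ω ^ (2 * (n + 1)) ∂ℙ) / (2 * (n + 1))))
      = fun n : ℕ => (1 / (2 * (n + 1) : ℝ)) *
          (∫ ω, t ω ^ (2 * (n + 1)) ∂ℙ) *
          (1 - ∫ ω, (W ω) ^ (2 * (n + 1)) ∂ℙ) ^ 2 := by
    funext n; ring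
  rw [hfn] at H
  refine ⟨?_, ?_, ?_, H.summable, ?_⟩
  · rw [e1]; exact hI1
  · rw [e2]; exact hI2
  · rw [e3]; exact hI3
  · rw [e1, e2, e3]
    exact H.tsum_eq.symm
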